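/- Let p be a prime and A an n×n matrix over F_p = ZMod p (the case m = 1), and suppose there exists a scalar a ∈ F_p such that A 1_n = a 1_n. Then the network x(t+1) = A x(t) achieves synchronization if and only if the characteristic polynomial of A equals λ^{n−1}(λ − a). -/

import Mathlib

open Matrix Polynomial Module

section Aux
variable {F : Type*} [Field F] {n : ℕ}

lemma charpoly_mulVecLin (A : Matrix (Fin n) (Fin n) F) :
    (Matrix.mulVecLin A).charpoly = A.charpoly := by
  rw [← LinearMap.charpoly_toMatrix A.mulVecLin (Pi.basisFun F (Fin n)),
    LinearMap.toMatrix_eq_toMatrix',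
    show A.mulVecLin = Matrix.toLin' A from rfl, LinearMap.toMatrix'_toLin']

lemma mulVecLin_pow (A : Matrix (Fin n) (Fin n) F) (k : ℕ) :
    Matrix.mulVecLin (A ^ k) = (A.mulVecLin) ^ k := by
  induction k with
  | zero => simp [Matrix.mulVecLin_one, Module.End.one_eq_id]
  | succ k ih => rw [pow_succ, pow_succ, Matrix.mulVecLin_mul, ih]; rfl

lemma charpoly_shift (A : Matrix (Fin n) (Fin n) F) (a : F) :
    (A - a • 1).charpoly = (A.charpoly).comp (X + C a) := by
  let f : F[X] →+* F[X] := eval₂RingHom C (X + C a)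
  have h1 : (A.charpoly).comp (X + C a) = f A.charpoly := rfl
  rw [h1, Matrix.charpoly, Matrix.charpoly, RingHom.map_det]
  congr 1
  ext i j
  rcases eq_or_ne i j with rfl | hij
  · simp [f, charmatrix_apply_eq, Matrix.sub_apply, Matrix.smul_apply, Matrix.one_apply]
    ring
  · simp [f, charmatrix_apply_ne _ _ _ hij, Matrix.sub_apply, Matrix.smul_apply,
      Matrix.one_apply_ne hij]

lemma repr_lemma (hn : n ≠ 0) (q : F[X]) (hm : q.Monic) (hd : q.natDegree = n)
    (ht : ∀ k < n - 1, q.coeff k = 0) :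
    q = X ^ (n - 1) * (X + C (q.coeff (n - 1))) := by
  have hsucc : n - 1 + 1 = n := Nat.succ_pred_eq_of_ne_zero hn
  have h1 : (X : F[X]) ^ (n-1) * (X + C (q.coeff (n-1)))
      = X ^ n + C (q.coeff (n-1)) * X ^ (n-1) := by
    rw [mul_add, ← pow_succ, hsucc]; ring
  rw [h1]
  ext k
  simp only [coeff_add, coeff_X_pow, coeff_C_mul]
  rcases lt_trichotomy k (n-1) with h | rfl | h
  · rw [ht k h, if_neg (by omega), if_neg (by omega)]; ring
  · rw [if_neg (by omega), if_pos rfl]; ring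
  · rcases eq_or_lt_of_le (Nat.succ_le_of_lt h) with h2 | h2
    · have : k = n := by omega
      subst this
      rw [if_pos rfl, if_neg (by omega), ← hd, hm.coeff_natDegree]; ring
    · rw [coeff_eq_zero_of_natDegree_lt (by omega), if_neg (by omega), if_neg (by omega)]; ring

end Aux

theorem synchronization_iff_charpoly_dim_one (p n : ℕ) [Fact p.Prime] [NeZero n]
    (A : Matrix (Fin n) (Fin n) (ZMod p)) (a : ZMod p)
    (ha : A *ᵥ (fun _ => 1) = fun _ => a) :
    (∀ x0 : Fin n → ZMod p, ∃ T : ℕ, ∀ t ≥ T,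
        ∀ i j : Fin n, ((A ^ t) *ᵥ x0) i = ((A ^ t) *ᵥ x0) j) ↔
      A.charpoly = X ^ (n - 1) * (X - C a) := by
  have hn : n ≠ 0 := NeZero.ne n
  have hsucc : n - 1 + 1 = n := Nat.succ_pred_eq_of_ne_zero hn
  set one : Fin n → ZMod p := fun _ => 1 with hone_def
  have i0 : Fin n := ⟨0, Nat.pos_of_ne_zero hn⟩
  have hone : one ≠ 0 := by
    intro h
    have := congrFun h i0
    simp [one] at this
  have hA1 : A *ᵥ one = a • one := by
    have h : A *ᵥ one = fun _ => a := ha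
    rw [h]; funext j; simp [one]
  have hApow : ∀ k : ℕ, (A ^ k) *ᵥ one = a ^ k • one := by
    intro k; induction k with
    | zero => simp [Matrix.one_mulVec]
    | succ k ih =>
        rw [pow_succ, ← Matrix.mulVec_mulVec, hA1, Matrix.mulVec_smul, ih, smul_smul,
          ← pow_succ']
  have hmemD : ∀ v : Fin n → ZMod p, (∀ i j, v i = v j) →
      v ∈ Submodule.span (ZMod p) {one} := by
    intro v hv
    have hveq : v = v i0 • one := by
      funext j
      simp only [Pi.smul_apply, smul_eq_mul, one, mul_one]
      exact hv j i0
    rw [hveq]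
    exact Submodule.smul_mem _ _ (Submodule.subset_span (Set.mem_singleton one))
  constructor
  · intro H
    choose g hg using H
    set T : ℕ := Finset.univ.sup (fun i : Fin n => g (fun j => if i = j then 1 else 0)) with hT
    have hrange : ∀ x : Fin n → ZMod p, (A ^ T) *ᵥ x ∈ Submodule.span (ZMod p) {one} := by
      intro x
      show (A ^ T).mulVecLin x ∈ _
      rw [pi_eq_sum_univ x, map_sum]
      apply Submodule.sum_mem
      intro i _
      rw [_root_.map_smul]
      refine Submodule.smul_mem _ _ (hmemD _ (fun i' j' => ?_))
      exact hg _ T (Finset.le_sup (f := fun i : Fin n => g fun j => if i = j then 1 else 0) (Finset.mem_univ i)) i' j'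
    have hrange' : LinearMap.range ((A.mulVecLin) ^ T) ≤ Submodule.span (ZMod p) {one} := by
      rintro y ⟨x, rfl⟩
      rw [← mulVecLin_pow]
      exact hrange x
    have hkerrank : n - 1 ≤ finrank (ZMod p) (LinearMap.ker ((A.mulVecLin) ^ T)) := by
      have h1 := LinearMap.finrank_range_add_finrank_ker ((A.mulVecLin) ^ T)
      rw [Module.finrank_fin_fun] at h1
      have h2 : finrank (ZMod p) (LinearMap.range ((A.mulVecLin) ^ T)) ≤ 1 := by
        have h3 := Submodule.finrank_mono hrange'
        rwa [finrank_span_singleton hone] at h3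
      omega
    have hkerle : LinearMap.ker ((A.mulVecLin) ^ T) ≤ Module.End.maxGenEigenspace A.mulVecLin 0 := by
      intro x hx
      rw [Module.End.mem_maxGenEigenspace]
      exact ⟨T, by simpa using LinearMap.mem_ker.mp hx⟩
    by_cases haz : a = 0
    · subst haz
      have hnil : A ^ (T + 1) = 0 := by
        have hz : ∀ x : Fin n → ZMod p, (A ^ (T+1)) *ᵥ x = 0 := by
          intro x
          obtain ⟨c, hc⟩ := Submodule.mem_span_singleton.mp (hrange x)
          rw [pow_succ', ← Matrix.mulVec_mulVec, ← hc, Matrix.mulVec_smul, hA1]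
          simp
        apply Matrix.toLin'.injective
        apply LinearMap.ext
        intro x
        rw [map_zero, LinearMap.zero_apply, Matrix.toLin'_apply]; exact hz x
      have hcp : A.charpoly = X ^ n := by
        have h := (Matrix.isNilpotent_charpoly_sub_pow_of_isNilpotent ⟨T+1, hnil⟩).eq_zero
        rw [sub_eq_zero] at h
        simpa using h
      rw [hcp, map_zero, sub_zero, ← pow_succ, hsucc]
    · have hmaxlt : Module.End.maxGenEigenspace A.mulVecLin 0 < ⊤ := by
        rw [lt_top_iff_ne_top]
        intro htop
        have h1 : one ∈ Module.End.maxGenEigenspace A.mulVecLin 0 := htop ▸ Submodule.mem_top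
        rw [Module.End.mem_maxGenEigenspace] at h1
        obtain ⟨k, hk⟩ := h1
        simp only [zero_smul, sub_zero] at hk
        rw [← mulVecLin_pow] at hk
        have h2 : (A ^ k) *ᵥ one = 0 := hk
        rw [hApow] at h2
        rcases smul_eq_zero.mp h2 with h | h
        · exact pow_ne_zero _ haz h
        · exact hone h
      have hfr : finrank (ZMod p) (Module.End.maxGenEigenspace A.mulVecLin 0) = n - 1 := by
        have hub := Submodule.finrank_lt hmaxlt.ne
        rw [Module.finrank_fin_fun] at hub
        have hlb := le_trans hkerrank (Submodule.finrank_mono hkerle)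
        omega
      have htd : natTrailingDegree A.charpoly = n - 1 := by
        rw [← _root_.charpoly_mulVecLin, ← LinearMap.finrank_maxGenEigenspace_zero_eq, hfr]
      have hrep := repr_lemma hn A.charpoly (A.charpoly_monic)
        (by rw [Matrix.charpoly_natDegree_eq_dim, Fintype.card_fin])
        (fun k hk => coeff_eq_zero_of_lt_natTrailingDegree (by omega))
      set b := A.charpoly.coeff (n-1) with hb_def
      have hCH := A.aeval_self_charpoly
      rw [hrep, _root_.map_mul, map_pow, aeval_X, map_add, aeval_X, aeval_C,
        Algebra.algebraMap_eq_smul_one] at hCH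
      have h2 : ((A ^ (n-1)) * (A + b • 1)) *ᵥ one = ((a + b) * a ^ (n-1)) • one := by
        rw [← Matrix.mulVec_mulVec, Matrix.add_mulVec, hA1, Matrix.smul_mulVec,
          Matrix.one_mulVec, ← add_smul, Matrix.mulVec_smul, hApow, smul_smul]
      rw [hCH, Matrix.zero_mulVec] at h2
      have h3 : (a + b) * a ^ (n-1) = 0 := by
        rcases smul_eq_zero.mp h2.symm with h | h
        · exact h
        · exact absurd h hone
      have hb : b = -a := by
        rcases mul_eq_zero.mp h3 with h | h
        · exact eq_neg_of_add_eq_zero_right h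
        · exact absurd h (pow_ne_zero _ haz)
      rw [hrep, hb, map_neg, ← sub_eq_add_neg]
  · intro h x0
    have hCH := A.aeval_self_charpoly
    rw [h, _root_.map_mul, map_pow, aeval_X, map_sub, aeval_X, aeval_C,
      Algebra.algebraMap_eq_smul_one] at hCH
    by_cases haz : a = 0
    · subst haz
      have hn0 : A ^ n = 0 := by
        have h2 : A ^ (n - 1) * A = 0 := by simpa using hCH
        calc A ^ n = A ^ (n - 1 + 1) := by rw [hsucc]
        _ = A ^ (n-1) * A := pow_succ A (n-1)
        _ = 0 := h2
      refine ⟨n, fun t ht i j => ?_⟩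
      have hAt : A ^ t = 0 := by
        rw [show t = n + (t - n) by omega, pow_add, hn0, zero_mul]
      simp [hAt, Matrix.zero_mulVec]
    · have hcomm : (A - a • 1) * A ^ (n-1) = 0 := by
        have hc : (A - a • 1) * A ^ (n-1) = A ^ (n-1) * (A - a • 1) := by
          rw [sub_mul, mul_sub, Matrix.smul_mul, Matrix.mul_smul, one_mul, mul_one,
            ← pow_succ, ← pow_succ']
        rw [hc, hCH]
      have honeK : Submodule.span (ZMod p) {one} ≤ LinearMap.ker ((A - a • 1).mulVecLin) := by
        rw [Submodule.span_le, Set.singleton_subset_iff]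
        show (A - a • 1) *ᵥ one = 0
        rw [Matrix.sub_mulVec, hA1, Matrix.smul_mulVec, Matrix.one_mulVec, sub_self]
      have hKrank : finrank (ZMod p) (LinearMap.ker ((A - a • 1).mulVecLin)) ≤ 1 := by
        have hKle : LinearMap.ker ((A - a • 1).mulVecLin) ≤
            Module.End.maxGenEigenspace (A - a • 1).mulVecLin 0 := by
          intro x hx
          rw [Module.End.mem_maxGenEigenspace]
          exact ⟨1, by simpa using LinearMap.mem_ker.mp hx⟩
        have h4 := Submodule.finrank_mono hKle
        rw [LinearMap.finrank_maxGenEigenspace_zero_eq, _root_.charpoly_mulVecLin, charpoly_shift, h] at h4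
        have hcompeq : ((X : Polynomial (ZMod p)) ^ (n-1) * (X - C a)).comp (X + C a)
            = (X + C a)^(n-1) * X := by
          simp [mul_comp, pow_comp, sub_comp, X_comp, C_comp]
        rw [hcompeq] at h4
        have hntd : natTrailingDegree (((X : Polynomial (ZMod p)) + C a)^(n-1) * X) = 1 := by
          have hne : ((X + C a : Polynomial (ZMod p)))^(n-1) ≠ 0 :=
            pow_ne_zero _ (X_add_C_ne_zero a)
          rw [natTrailingDegree_mul hne X_ne_zero, natTrailingDegree_X,
            natTrailingDegree_eq_zero_of_constantCoeff_ne_zero, zero_add]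
          rw [map_pow]
          apply pow_ne_zero
          simpa using haz
        rw [hntd] at h4
        exact h4
      have hKeq : LinearMap.ker ((A - a • 1).mulVecLin) = Submodule.span (ZMod p) {one} :=
        (Submodule.eq_of_le_of_finrank_le honeK
          (by rw [finrank_span_singleton hone]; exact hKrank)).symm
      refine ⟨n - 1, fun t ht i j => ?_⟩
      have hy : (A - a • 1) *ᵥ ((A ^ t) *ᵥ x0) = 0 := by
        rw [Matrix.mulVec_mulVec, show t = (n-1) + (t - (n-1)) by omega, pow_add,
          ← mul_assoc, hcomm, zero_mul, Matrix.zero_mulVec]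
      have hmem : (A ^ t) *ᵥ x0 ∈ LinearMap.ker ((A - a • 1).mulVecLin) :=
        LinearMap.mem_ker.mpr hy
      rw [hKeq] at hmem
      obtain ⟨c, hc⟩ := Submodule.mem_span_singleton.mp hmem
      rw [← hc]
      simp [one]
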